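/- A lottery p is SD-efficient at a profile R if and only if for every lottery q satisfying Σ_{y ≿_i x} q(y) ≥ Σ_{y ≿_i x} p(y) for all agents i and all alternatives x, it holds that Σ_{i∈N} Σ_{x∈A} Σ_{y ≿_i x} (q(y) − p(y)) = 0, i.e., the optimal value of the corresponding linear program is zero. -/
import Mathlib


open Classical

noncomputable section

variable {A : Type*} [Fintype A]

/-- A (weak) preference relation: complete and transitive. -/
def IsPref (r : A → A → Prop) : Prop :=
  (∀ x y, r x y ∨ r y x) ∧ ∀ x y z, r x y → r y z → r x z

/-- A lottery over the alternatives. -/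
def Lottery (A : Type*) [Fintype A] :=
  {p : A → ℝ // (∀ x, 0 ≤ p x) ∧ ∑ x, p x = 1}

/-- Probability that lottery `p` yields an alternative at least as good as `x` w.r.t. `r`. -/
def upperSum (r : A → A → Prop) (p : Lottery A) (x : A) : ℝ :=
  ∑ y, if r y x then p.1 y else 0

/-- `p` (weakly) stochastically dominates `q` w.r.t. the preference relation `r`. -/
def SDGe (r : A → A → Prop) (p q : Lottery A) : Prop :=
  ∀ x, upperSum r q x ≤ upperSum r p x

/-- Strict stochastic dominance. -/
def SDGt (r : A → A → Prop) (p q : Lottery A) : Prop :=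
  SDGe r p q ∧ ¬ SDGe r q p

/-- A profile assigning a preference relation to each of `n` agents; validity. -/
def ValidProfile {n : ℕ} (R : Fin n → A → A → Prop) : Prop :=
  ∀ i, IsPref (R i)

/-- `p` is SD-efficient at profile `R`. -/
def SDEfficientAt {n : ℕ} (R : Fin n → A → A → Prop) (p : Lottery A) : Prop :=
  ¬ ∃ q : Lottery A, (∀ i, SDGe (R i) q p) ∧ ∃ i, SDGt (R i) q p

def Anonymous {n : ℕ} (f : (Fin n → A → A → Prop) → Lottery A) : Prop :=
  ∀ R : Fin n → A → A → Prop, ValidProfile R →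
    ∀ σ : Equiv.Perm (Fin n), f (R ∘ σ) = f R

/-- Relabel a preference relation by a permutation of the alternatives. -/
def relabel (π : Equiv.Perm A) (r : A → A → Prop) : A → A → Prop :=
  fun x y => r (π.symm x) (π.symm y)

def relabelProfile {n : ℕ} (π : Equiv.Perm A) (R : Fin n → A → A → Prop) :
    Fin n → A → A → Prop :=
  fun i => relabel π (R i)

def Neutral {n : ℕ} (f : (Fin n → A → A → Prop) → Lottery A) : Prop :=
  ∀ R : Fin n → A → A → Prop, ValidProfile R →
    ∀ (π : Equiv.Perm A) (x : A), (f (relabelProfile π R)).1 (π x) = (f R).1 x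

def Efficient {n : ℕ} (f : (Fin n → A → A → Prop) → Lottery A) : Prop :=
  ∀ R : Fin n → A → A → Prop, ValidProfile R → SDEfficientAt R (f R)

def Strategyproof {n : ℕ} (f : (Fin n → A → A → Prop) → Lottery A) : Prop :=
  ¬ ∃ (R : Fin n → A → A → Prop) (i : Fin n) (r : A → A → Prop),
      ValidProfile R ∧ IsPref r ∧ SDGt (R i) (f (Function.update R i r)) (f R)


/-- LP characterization of SD-efficiency: `p` is SD-efficient iff every feasible `q`
(SD-dominating `p` coordinatewise) has objective value zero. -/
theorem sd_efficient_iff_lp {A : Type*} [Fintype A] {n : ℕ}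
    (R : Fin n → A → A → Prop) (hR : ValidProfile R) (p : Lottery A) :
    SDEfficientAt R p ↔
      ∀ q : Lottery A, (∀ (i : Fin n) (x : A), upperSum (R i) p x ≤ upperSum (R i) q x) →
        ∑ i : Fin n, ∑ x : A, (upperSum (R i) q x - upperSum (R i) p x) = 0 := by
  constructor
  · intro heff q hq
    by_contra hne
    have hnonneg : ∀ i ∈ Finset.univ, (0:ℝ) ≤
        ∑ x : A, (upperSum (R i) q x - upperSum (R i) p x) := by
      intro i _
      exact Finset.sum_nonneg fun x _ => sub_nonneg.2 (hq i x)
    have hpos : ∃ i ∈ Finset.univ,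
        (0:ℝ) < ∑ x : A, (upperSum (R i) q x - upperSum (R i) p x) := by
      by_contra h
      push_neg at h
      exact hne (le_antisymm (Finset.sum_nonpos fun i _ => h i (Finset.mem_univ i))
        (Finset.sum_nonneg hnonneg))
    obtain ⟨i, _, hi⟩ := hpos
    have hx : ∃ x ∈ Finset.univ, (0:ℝ) < upperSum (R i) q x - upperSum (R i) p x := by
      by_contra h
      push_neg at h
      have : ∑ x : A, (upperSum (R i) q x - upperSum (R i) p x) ≤ 0 :=
        Finset.sum_nonpos fun x _ => h x (Finset.mem_univ x)
      linarith
    obtain ⟨x, _, hxpos⟩ := hx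
    exact heff ⟨q, fun j => hq j, i, fun y => hq i y, fun hge => by
      have := hge x; simp only [sub_pos] at hxpos; linarith⟩
  · intro hlp ⟨q, hge, i, _, hnot⟩
    have hfeas : ∀ (j : Fin n) (x : A), upperSum (R j) p x ≤ upperSum (R j) q x :=
      fun j x => hge j x
    have hsum := hlp q hfeas
    have hzero : ∀ j : Fin n, ∀ x : A,
        upperSum (R j) q x - upperSum (R j) p x = 0 := by
      have h1 : ∀ j ∈ Finset.univ,
          ∑ x : A, (upperSum (R j) q x - upperSum (R j) p x) = 0 :=
        (Finset.sum_eq_zero_iff_of_nonneg fun j _ =>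
          Finset.sum_nonneg fun x _ => sub_nonneg.2 (hfeas j x)).1 hsum
      intro j x
      exact (Finset.sum_eq_zero_iff_of_nonneg fun x _ =>
        sub_nonneg.2 (hfeas j x)).1 (h1 j (Finset.mem_univ j)) x (Finset.mem_univ x)
    exact hnot fun x => le_of_eq (sub_eq_zero.1 (hzero i x))

end
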